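/- Let F be a field of odd characteristic, L/F a field extension of degree m, and n = 2^{s+1} r an even integer with r odd and m ≥ n. If there exists a self-dual L-linear code C ⊆ Lⁿ (with respect to the standard inner product), then −1 is a sum of 2^s squares in L. -/

import Mathlib

open Matrix Module

lemma key_neg_one_sq (L : Type*) [Field L] {r n : ℕ} (hr : Odd r) (hn : n = 2 * r)
    (C : Submodule L (Fin n → L))
    (hC : ∀ x, x ∈ C ↔ ∀ y ∈ C, ∑ i, x i * y i = 0) :
    ∃ c : L, c ^ 2 = -1 := by
  classical
  let B : LinearMap.BilinForm L (Fin n → L) :=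
    LinearMap.mk₂ L (fun x y => ∑ i, x i * y i)
      (fun x x' y => by simp [add_mul, Finset.sum_add_distrib])
      (fun a x y => by simp [Finset.mul_sum, mul_assoc])
      (fun x y y' => by simp [mul_add, Finset.sum_add_distrib])
      (fun a x y => by simp [Finset.mul_sum, mul_left_comm])
  have hBapp : ∀ x y, B x y = ∑ i, x i * y i := fun _ _ => rfl
  have hrefl : B.IsRefl := by
    intro x y h
    simpa [hBapp, mul_comm] using h
  have hnd : B.Nondegenerate := by
    refine (LinearMap.IsRefl.nondegenerate_iff_separatingLeft hrefl).mpr ?_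
    intro x hx
    funext i
    have := hx (Pi.single i 1)
    simpa [hBapp, Pi.single_apply, mul_ite] using this
  have hCo : C = B.orthogonal C := by
    ext x
    rw [hC x, LinearMap.BilinForm.mem_orthogonal_iff]
    constructor
    · intro h y hy
      have := h y hy
      simpa [LinearMap.BilinForm.IsOrtho, hBapp, mul_comm] using this
    · intro h y hy
      have := h y hy
      simpa [LinearMap.BilinForm.IsOrtho, hBapp, mul_comm] using this
  have hdim : finrank L C = r := by
    have h1 := LinearMap.BilinForm.finrank_add_finrank_orthogonal hrefl (B := B) C
    rw [← hCo, LinearMap.BilinForm.orthogonal_top_eq_bot hnd, inf_bot_eq, finrank_bot, add_zero,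
      finrank_pi] at h1
    simp only [Fintype.card_fin] at h1
    omega
  obtain ⟨D, hD⟩ := Submodule.exists_isCompl C
  have hdimD : finrank L D = r := by
    have := Submodule.finrank_add_eq_of_isCompl hD
    rw [hdim, finrank_pi] at this
    simp only [Fintype.card_fin] at this
    omega
  let bC : Basis (Fin r) L C := finBasisOfFinrankEq L C hdim
  let bD : Basis (Fin r) L D := finBasisOfFinrankEq L D hdimD
  let bV : Basis (Fin r ⊕ Fin r) L (Fin n → L) :=
    (bC.prod bD).map (Submodule.prodEquivOfIsCompl C D hD)
  have hbl : ∀ i, bV (Sum.inl i) = (bC i : Fin n → L) := by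
    intro i
    simp [bV, Submodule.coe_prodEquivOfIsCompl']
  have hbr : ∀ i, bV (Sum.inr i) = (bD i : Fin n → L) := by
    intro i
    simp [bV, Submodule.coe_prodEquivOfIsCompl']
  let e : Fin r ⊕ Fin r ≃ Fin n := finSumFinEquiv.trans (finCongr (by omega))
  let M : Matrix (Fin n) (Fin n) L := Matrix.of fun i j => bV (e.symm i) j
  have hMdet : M.det ≠ 0 := by
    have hM : M = ((Pi.basisFun L (Fin n)).toMatrix (bV.reindex e))ᵀ := by
      ext i j
      simp [M, Basis.toMatrix_apply]
    have h1 := Basis.toMatrix_mul_toMatrix_flip (Pi.basisFun L (Fin n)) (bV.reindex e)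
    have := congrArg Matrix.det h1
    rw [Matrix.det_mul, Matrix.det_one] at this
    rw [hM, Matrix.det_transpose]
    intro h
    rw [h, zero_mul] at this
    exact zero_ne_one this
  let A : Matrix (Fin r) (Fin r) L :=
    Matrix.of fun i j => ∑ k, (bC i : Fin n → L) k * (bD j : Fin n → L) k
  let Dm : Matrix (Fin r) (Fin r) L :=
    Matrix.of fun i j => ∑ k, (bD i : Fin n → L) k * (bD j : Fin n → L) k
  have hGram : M * Mᵀ = (Matrix.fromBlocks 0 A Aᵀ Dm).submatrix e.symm e.symm := by
    ext i j
    simp only [Matrix.mul_apply, Matrix.transpose_apply, Matrix.submatrix_apply, M, Matrix.of_apply]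
    rcases hi : e.symm i with i' | i' <;> rcases hj : e.symm j with j' | j' <;>
      simp only [Matrix.fromBlocks_apply₁₁, Matrix.fromBlocks_apply₁₂,
        Matrix.fromBlocks_apply₂₁, Matrix.fromBlocks_apply₂₂, Matrix.zero_apply,
        Matrix.transpose_apply, Matrix.of_apply, hbl, hbr, A, Dm]
    · exact (hC _).mp (bC i').2 _ (bC j').2
    · exact Finset.sum_congr rfl fun k _ => mul_comm _ _
  let J : Matrix (Fin r ⊕ Fin r) (Fin r ⊕ Fin r) L := Matrix.fromBlocks 0 1 1 0
  have hJdet : J.det = (-1 : L) ^ r := by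
    have hfac : J = Matrix.fromBlocks 1 1 0 1 * Matrix.fromBlocks 1 0 (-1) 1 *
        Matrix.fromBlocks 1 1 0 1 * Matrix.fromBlocks (-1) 0 0 1 := by
      simp [J, Matrix.fromBlocks_multiply]
    rw [hfac]
    simp only [Matrix.det_mul, Matrix.det_fromBlocks_zero₂₁, Matrix.det_fromBlocks_zero₁₂,
      Matrix.det_one, one_mul, mul_one]
    rw [show (-1 : Matrix (Fin r) (Fin r) L) = -(1 : Matrix (Fin r) (Fin r) L) from rfl,
      Matrix.det_neg, Matrix.det_one, mul_one]
    simp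
  have hfac2 : Matrix.fromBlocks (0 : Matrix (Fin r) (Fin r) L) A Aᵀ Dm =
      J * Matrix.fromBlocks Aᵀ Dm 0 A := by
    simp [J, Matrix.fromBlocks_multiply]
  have hkey : M.det ^ 2 = -(A.det ^ 2) := by
    have h1 : (M * Mᵀ).det = (Matrix.fromBlocks (0 : Matrix (Fin r) (Fin r) L) A Aᵀ Dm).det := by
      rw [hGram, Matrix.det_submatrix_equiv_self]
    rw [Matrix.det_mul, Matrix.det_transpose, ← pow_two] at h1
    rw [h1, hfac2, Matrix.det_mul, hJdet, Matrix.det_fromBlocks_zero₂₁, Matrix.det_transpose,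
      hr.neg_one_pow, ← pow_two]
    ring
  have hA : A.det ≠ 0 := by
    intro h
    rw [h] at hkey
    simp at hkey
    exact hMdet hkey
  exact ⟨M.det / A.det, by
    rw [div_pow, hkey, neg_div, div_self (pow_ne_zero _ hA)]⟩

theorem stmt_9 (F L : Type*) [Field F] [Field L] [Algebra F L] [FiniteDimensional F L]
    (p : ℕ) [Fact p.Prime] [CharP F p] (hp : Odd p)
    (s r : ℕ) (hr : Odd r) (n : ℕ) (hn : n = 2 ^ (s + 1) * r)
    (hm : n ≤ Module.finrank F L)
    (C : Submodule L (Fin n → L))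
    (hC : ∀ x, x ∈ C ↔ ∀ y ∈ C, ∑ i, x i * y i = 0) :
    ∃ f : Fin (2 ^ s) → L, ∑ i, f i ^ 2 = -1 := by
  have hcharL : CharP L p := charP_of_injective_algebraMap (algebraMap F L).injective p
  cases s with
  | zero =>
    obtain ⟨c, hc⟩ := key_neg_one_sq L hr (by simpa using hn) C hC
    exact ⟨fun _ => c, by simpa using hc⟩
  | succ t =>
    have : NeZero p := ⟨(Fact.out : p.Prime).ne_zero⟩
    obtain ⟨a, b, hab⟩ := CharP.sq_add_sq L p (-1)
    obtain ⟨k, hk⟩ : ∃ k, 2 ^ (t + 1) = k + 2 :=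
      ⟨2 ^ (t + 1) - 2, by have := Nat.one_lt_two_pow (n := t + 1) (by omega); omega⟩
    rw [hk]
    refine ⟨Fin.cons (a : L) (Fin.cons (b : L) 0), ?_⟩
    rw [Fin.sum_univ_succ, Fin.sum_univ_succ]
    simpa using hab
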